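/- Let q₁, q₂, q₃ be symmetric bilinear forms of mixed signature on a real vector space V such that q₃ − q₂ and q₂ − q₁ are positive definite. Then the cross-ratio distances satisfy cr([q₃],[q₁]) ≥ cr([q₃],[q₂]) · cr([q₂],[q₁]). -/

import Mathlib

set_option maxHeartbeats 1000000


open Matrix ENNReal

/-- A quadric of mixed signature: neither positive nor negative semidefinite. -/
def MixedSig {m : ℕ} (q : Matrix (Fin m) (Fin m) ℝ) : Prop :=
  (∃ v : Fin m → ℝ, 0 < v ⬝ᵥ (q *ᵥ v)) ∧ (∃ v : Fin m → ℝ, v ⬝ᵥ (q *ᵥ v) < 0)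

/-- The set of cross-ratios of the four zeros `ℓ₁, ℓ₂, ℓ₂′, ℓ₁′` (zeros of `q`
outermost, zeros of `q'` innermost) on projective lines `L` meeting the zero sets
of both quadrics; the line is parametrized as `[e + y f]` with `[f]` the point at
infinity of the chart. -/
noncomputable def crSet {m : ℕ} (q' q : Matrix (Fin m) (Fin m) ℝ) : Set ℝ≥0∞ :=
  {c | ∃ e f : Fin m → ℝ, LinearIndependent ℝ ![e, f] ∧
    ∃ x₂' x₁' x₁ x₂ : ℝ, x₂' < x₁' ∧ x₁' ≤ x₁ ∧ x₁ < x₂ ∧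
    (∀ y : ℝ, (e + y • f) ⬝ᵥ (q *ᵥ (e + y • f)) = 0 ↔ (y = x₁' ∨ y = x₁)) ∧
    (∀ y : ℝ, (e + y • f) ⬝ᵥ (q' *ᵥ (e + y • f)) = 0 ↔ (y = x₂' ∨ y = x₂)) ∧
    f ⬝ᵥ (q *ᵥ f) ≠ 0 ∧ f ⬝ᵥ (q' *ᵥ f) ≠ 0 ∧
    c = (ENNReal.ofReal (x₂ - x₁') * ENNReal.ofReal (x₁ - x₂')) /
        (ENNReal.ofReal (x₂ - x₂') * ENNReal.ofReal (x₁ - x₁'))}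

/-- The cross-ratio distance `cr([q'],[q]) ∈ [1,∞]` between nested quadrics
(`q' − q` positive definite). -/
noncomputable def crDist {m : ℕ} (q' q : Matrix (Fin m) (Fin m) ℝ) : ℝ≥0∞ :=
  sInf (crSet q' q)

/-- Factorization of a quadratic polynomial from two distinct roots. -/
lemma quad_factor (a b c r s : ℝ) (hrs : r ≠ s)
    (hr : a * r^2 + b * r + c = 0) (hs : a * s^2 + b * s + c = 0) :
    ∀ y : ℝ, a * y^2 + b * y + c = a * (y - r) * (y - s) := by
  have hb : b = -(a * (r + s)) := by
    have key : (r - s) * (a * (r + s) + b) = 0 := by linear_combination hr - hs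
    have hne : r - s ≠ 0 := sub_ne_zero.mpr hrs
    have := (mul_eq_zero.mp key).resolve_left hne
    linarith
  have hc : c = a * (r * s) := by
    rw [hb] at hr; nlinarith [hr]
  intro y; rw [hb, hc]; ring

/-- For quadrics `q₁, q₂, q₃` of mixed signature with `q₃ − q₂` and
`q₂ − q₁` positive definite, the cross-ratio distances satisfy the reversed
triangle inequality `cr([q₃],[q₁]) ≥ cr([q₃],[q₂]) · cr([q₂],[q₁])`. -/
theorem crDist_reversed_triangle (m : ℕ) (q₁ q₂ q₃ : Matrix (Fin m) (Fin m) ℝ)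
    (hs₁ : q₁.IsSymm) (hs₂ : q₂.IsSymm) (hs₃ : q₃.IsSymm)
    (hm₁ : MixedSig q₁) (hm₂ : MixedSig q₂) (hm₃ : MixedSig q₃)
    (h32 : (q₃ - q₂).PosDef) (h21 : (q₂ - q₁).PosDef) :
    crDist q₃ q₂ * crDist q₂ q₁ ≤ crDist q₃ q₁ := by
  rw [show crDist q₃ q₁ = sInf (crSet q₃ q₁) from rfl]
  refine le_sInf fun c hc => ?_
  obtain ⟨e, f, hli, a, cc, d, ff, hac, hcd, hdf, hq1, hq3, hf1, hf3, hceq⟩ := hc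
  -- degenerate case: tangency x₁' = x₁ gives c = ⊤
  rcases eq_or_lt_of_le hcd with heq | hcd'
  · subst heq
    have : c = ⊤ := by
      rw [hceq, sub_self, ENNReal.ofReal_zero, mul_zero, ENNReal.div_zero]
      exact mul_ne_zero (ENNReal.ofReal_pos.mpr (by linarith)).ne'
        (ENNReal.ofReal_pos.mpr (by linarith)).ne'
    rw [this]; exact le_top
  obtain ⟨hf0, hef⟩ := linearIndependent_fin2.mp hli
  simp only [Matrix.cons_val_zero, Matrix.cons_val_one, Matrix.head_cons] at hf0 hef
  have hvne : ∀ y : ℝ, e + y • f ≠ 0 := by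
    intro y h
    refine hef (-y) ?_
    rw [neg_smul]
    exact neg_eq_of_add_eq_zero_left h
  -- quadratic forms along the line
  have hform : ∀ (q : Matrix (Fin m) (Fin m) ℝ) (y : ℝ),
      (e + y • f) ⬝ᵥ (q *ᵥ (e + y • f)) =
        (f ⬝ᵥ (q *ᵥ f)) * y^2 + (e ⬝ᵥ (q *ᵥ f) + f ⬝ᵥ (q *ᵥ e)) * y + e ⬝ᵥ (q *ᵥ e) := by
    intro q y
    simp [Matrix.mulVec_add, Matrix.mulVec_smul, dotProduct_add, add_dotProduct,
      dotProduct_smul, smul_dotProduct, smul_eq_mul]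
    ring
  set a₁ := f ⬝ᵥ (q₁ *ᵥ f) with ha₁def
  set b₁ := e ⬝ᵥ (q₁ *ᵥ f) + f ⬝ᵥ (q₁ *ᵥ e) with hb₁def
  set c₁ := e ⬝ᵥ (q₁ *ᵥ e) with hc₁def
  set a₂ := f ⬝ᵥ (q₂ *ᵥ f) with ha₂def
  set b₂ := e ⬝ᵥ (q₂ *ᵥ f) + f ⬝ᵥ (q₂ *ᵥ e) with hb₂def
  set c₂ := e ⬝ᵥ (q₂ *ᵥ e) with hc₂def
  set a₃ := f ⬝ᵥ (q₃ *ᵥ f) with ha₃def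
  set b₃ := e ⬝ᵥ (q₃ *ᵥ f) + f ⬝ᵥ (q₃ *ᵥ e) with hb₃def
  set c₃ := e ⬝ᵥ (q₃ *ᵥ e) with hc₃def
  set P₁ : ℝ → ℝ := fun y => a₁ * y^2 + b₁ * y + c₁ with hP₁def
  set P₂ : ℝ → ℝ := fun y => a₂ * y^2 + b₂ * y + c₂ with hP₂def
  set P₃ : ℝ → ℝ := fun y => a₃ * y^2 + b₃ * y + c₃ with hP₃def
  have h1 : ∀ y : ℝ, (e + y • f) ⬝ᵥ (q₁ *ᵥ (e + y • f)) = P₁ y := fun y => hform q₁ y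
  have h2 : ∀ y : ℝ, (e + y • f) ⬝ᵥ (q₂ *ᵥ (e + y • f)) = P₂ y := fun y => hform q₂ y
  have h3 : ∀ y : ℝ, (e + y • f) ⬝ᵥ (q₃ *ᵥ (e + y • f)) = P₃ y := fun y => hform q₃ y
  -- strict inequalities along the line
  have hsub : ∀ (M N : Matrix (Fin m) (Fin m) ℝ) (v : Fin m → ℝ),
      v ⬝ᵥ ((M - N) *ᵥ v) = v ⬝ᵥ (M *ᵥ v) - v ⬝ᵥ (N *ᵥ v) := by
    intro M N v; rw [Matrix.sub_mulVec, dotProduct_sub]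
  have h21' : ∀ y : ℝ, P₁ y < P₂ y := by
    intro y
    have := h21.dotProduct_mulVec_pos (hvne y)
    simp only [star_trivial] at this
    rw [hsub] at this
    rw [← h1 y, ← h2 y]; linarith
  have h32' : ∀ y : ℝ, P₂ y < P₃ y := by
    intro y
    have := h32.dotProduct_mulVec_pos (hvne y)
    simp only [star_trivial] at this
    rw [hsub] at this
    rw [← h2 y, ← h3 y]; linarith
  have ha12 : a₁ < a₂ := by
    have := h21.dotProduct_mulVec_pos hf0
    simp only [star_trivial] at this
    rw [hsub] at this; simp only [ha₁def, ha₂def]; linarith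
  have ha23 : a₂ < a₃ := by
    have := h32.dotProduct_mulVec_pos hf0
    simp only [star_trivial] at this
    rw [hsub] at this; simp only [ha₂def, ha₃def]; linarith
  -- root equations
  have hr1c : P₁ cc = 0 := by rw [← h1]; exact (hq1 cc).mpr (Or.inl rfl)
  have hr1d : P₁ d = 0 := by rw [← h1]; exact (hq1 d).mpr (Or.inr rfl)
  have hr3a : P₃ a = 0 := by rw [← h3]; exact (hq3 a).mpr (Or.inl rfl)
  have hr3f : P₃ ff = 0 := by rw [← h3]; exact (hq3 ff).mpr (Or.inr rfl)
  have haf : a < ff := by linarith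
  have hfac3 : ∀ y : ℝ, P₃ y = a₃ * (y - a) * (y - ff) :=
    quad_factor a₃ b₃ c₃ a ff (ne_of_lt haf) hr3a hr3f
  -- sign of a₃ hence a₂
  have ha₃neg : a₃ < 0 := by
    have h0 : 0 < P₃ cc := by
      have u1 := h21' cc; have u2 := h32' cc; linarith [hr1c]
    nlinarith [hfac3 cc, mul_pos (show (0:ℝ) < cc - a by linarith)
      (show (0:ℝ) < ff - cc by linarith)]
  have ha₂neg : a₂ < 0 := lt_trans ha23 ha₃neg
  -- sign values of P₂ at the four points
  have hs_a : P₂ a < 0 := by have := h32' a; linarith [hr3a]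
  have hs_c : 0 < P₂ cc := by have := h21' cc; linarith [hr1c]
  have hs_d : 0 < P₂ d := by have := h21' d; linarith [hr1d]
  have hs_f : P₂ ff < 0 := by have := h32' ff; linarith [hr3f]
  have hcont : ContinuousOn P₂ (Set.Icc a cc) := (by fun_prop : Continuous P₂).continuousOn
  have hcont2 : ContinuousOn P₂ (Set.Icc d ff) := (by fun_prop : Continuous P₂).continuousOn
  obtain ⟨b, hbmem, hbeq⟩ : ∃ b ∈ Set.Ioo a cc, P₂ b = 0 := by
    have := intermediate_value_Ioo (le_of_lt hac) hcont
    have h0 : (0:ℝ) ∈ Set.Ioo (P₂ a) (P₂ cc) := ⟨hs_a, hs_c⟩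
    obtain ⟨b, hb, hb0⟩ := this h0
    exact ⟨b, hb, hb0⟩
  obtain ⟨ee, heemem, heeeq⟩ : ∃ ee ∈ Set.Ioo d ff, P₂ ee = 0 := by
    have := intermediate_value_Ioo' (le_of_lt hdf) hcont2
    have h0 : (0:ℝ) ∈ Set.Ioo (P₂ ff) (P₂ d) := ⟨hs_f, hs_d⟩
    obtain ⟨ee, hee, hee0⟩ := this h0
    exact ⟨ee, hee, hee0⟩
  obtain ⟨hab, hbc⟩ := hbmem
  obtain ⟨hde, hef'⟩ := heemem
  have hbe : b < ee := by linarith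
  have hfac2 : ∀ y : ℝ, P₂ y = a₂ * (y - b) * (y - ee) :=
    quad_factor a₂ b₂ c₂ b ee (ne_of_lt hbe) hbeq heeeq
  have hq2iff : ∀ y : ℝ, (e + y • f) ⬝ᵥ (q₂ *ᵥ (e + y • f)) = 0 ↔ (y = b ∨ y = ee) := by
    intro y
    rw [h2 y, hfac2 y]
    constructor
    · intro h
      rcases mul_eq_zero.mp h with h' | h'
      · rcases mul_eq_zero.mp h' with h'' | h''
        · exact absurd h'' ha₂neg.ne
        · exact Or.inl (by linarith [sub_eq_zero.mp h''])
      · exact Or.inr (by linarith [sub_eq_zero.mp h'])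
    · rintro (rfl | rfl) <;> ring
  have hf2 : a₂ ≠ 0 := ha₂neg.ne
  -- membership of the two intermediate cross-ratios
  set c₁' : ℝ≥0∞ := (ENNReal.ofReal (ff - b) * ENNReal.ofReal (ee - a)) /
      (ENNReal.ofReal (ff - a) * ENNReal.ofReal (ee - b)) with hc₁'def
  set c₂' : ℝ≥0∞ := (ENNReal.ofReal (ee - cc) * ENNReal.ofReal (d - b)) /
      (ENNReal.ofReal (ee - b) * ENNReal.ofReal (d - cc)) with hc₂'def
  have hmem1 : c₁' ∈ crSet q₃ q₂ :=
    ⟨e, f, hli, a, b, ee, ff, hab, le_of_lt hbe, hef', hq2iff, hq3, hf2, hf3, rfl⟩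
  have hmem2 : c₂' ∈ crSet q₂ q₁ :=
    ⟨e, f, hli, b, cc, d, ee, hbc, hcd, hde, hq1, hq2iff, hf1, hf2, rfl⟩
  have hle1 : crDist q₃ q₂ ≤ c₁' := sInf_le hmem1
  have hle2 : crDist q₂ q₁ ≤ c₂' := sInf_le hmem2
  refine le_trans (mul_le_mul' hle1 hle2) ?_
  -- reduce to a real inequality
  have hofr : ∀ A B D E : ℝ, 0 ≤ A → 0 ≤ B → 0 < D → 0 < E →
      (ENNReal.ofReal A * ENNReal.ofReal B) / (ENNReal.ofReal D * ENNReal.ofReal E) =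
        ENNReal.ofReal ((A * B) / (D * E)) := by
    intro A B D E hA hB hD hE
    rw [← ENNReal.ofReal_mul hA, ← ENNReal.ofReal_mul hD.le,
      ENNReal.ofReal_div_of_pos (mul_pos hD hE)]
  rw [hc₁'def, hc₂'def, hceq,
    hofr _ _ _ _ (by linarith) (by linarith) (by linarith) (by linarith),
    hofr _ _ _ _ (by linarith) (by linarith) (by linarith) (by linarith),
    hofr _ _ _ _ (by linarith) (by linarith) (by linarith) (by linarith),
    ← ENNReal.ofReal_mul (div_nonneg (mul_nonneg (by linarith) (by linarith))
      (mul_nonneg (by linarith) (by linarith)))]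
  apply ENNReal.ofReal_le_ofReal
  rw [div_mul_div_comm]
  rw [div_le_div_iff₀
    (_root_.mul_pos (_root_.mul_pos (by linarith : (0:ℝ) < ff - a) (by linarith))
      (_root_.mul_pos (by linarith : (0:ℝ) < ee - b) (by linarith)))
    (_root_.mul_pos (by linarith : (0:ℝ) < ff - a) (by linarith))]
  have k1 : (ff - b) * (ee - cc) ≤ (ff - cc) * (ee - b) := by
    nlinarith [mul_pos (show (0:ℝ) < cc - b by linarith)
      (show (0:ℝ) < ff - ee by linarith)]
  have k2 : (ee - a) * (d - b) ≤ (d - a) * (ee - b) := by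
    nlinarith [mul_pos (show (0:ℝ) < b - a by linarith)
      (show (0:ℝ) < ee - d by linarith)]
  have M : (ff - b) * (ee - cc) * ((ee - a) * (d - b)) ≤
      (ff - cc) * (ee - b) * ((d - a) * (ee - b)) :=
    mul_le_mul k1 k2 (mul_nonneg (by linarith) (by linarith))
      (mul_nonneg (by linarith) (by linarith))
  have P : (0:ℝ) ≤ (ff - a) * (d - cc) :=
    mul_nonneg (by linarith) (by linarith)
  nlinarith [mul_le_mul_of_nonneg_right M P]
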